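/- For every integer x ≥ 0, the quantity Ω(x) := (1/(2π))·( ∫_{-π}^{π} ( cos(xξ)/(2(1-cos ξ)) - 1/ξ² ) dξ - 2/π ) + x/2 equals 0. -/

import Mathlib

open Real intervalIntegral MeasureTheory Set Filter

-- Dirichlet-type identity
lemma omega_dirich (ξ : ℝ) (n : ℕ) :
    Real.cos (n * ξ) - Real.cos ((n + 1 : ℕ) * ξ) =
      2 * (1 - Real.cos ξ) * ((∑ k ∈ Finset.range (n + 1), Real.cos (k * ξ)) - 1 / 2) := by
  induction n with
  | zero => simp; ring
  | succ n ih =>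
    rw [Finset.sum_range_succ]
    push_cast at ih ⊢
    have h1 : Real.cos (((n : ℝ) + 1 + 1) * ξ)
        = Real.cos (((n : ℝ) + 1) * ξ) * Real.cos ξ - Real.sin (((n : ℝ) + 1) * ξ) * Real.sin ξ := by
      rw [← Real.cos_add]; ring_nf
    have h2 : Real.cos ((n : ℝ) * ξ)
        = Real.cos (((n : ℝ) + 1) * ξ) * Real.cos ξ + Real.sin (((n : ℝ) + 1) * ξ) * Real.sin ξ := by
      rw [← Real.cos_sub]; ring_nf
    linear_combination ih - h1 - h2

lemma omega_key (n : ℕ) (ξ : ℝ) :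
    1 - Real.cos (n * ξ) =
      2 * (1 - Real.cos ξ) *
        ((∑ k ∈ Finset.range n, ((n : ℝ) - k) * Real.cos (k * ξ)) - n / 2) := by
  induction n with
  | zero => simp
  | succ n ih =>
    have hs : (∑ k ∈ Finset.range (n + 1), (((n : ℝ) + 1) - k) * Real.cos (k * ξ))
        = (∑ k ∈ Finset.range n, ((n : ℝ) - k) * Real.cos (k * ξ))
          + ∑ k ∈ Finset.range (n + 1), Real.cos (k * ξ) := by
      have h : ∀ k ∈ Finset.range (n + 1),
          (((n : ℝ) + 1) - k) * Real.cos (k * ξ)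
            = ((n : ℝ) - k) * Real.cos (k * ξ) + Real.cos (k * ξ) := by
        intro k _; ring
      rw [Finset.sum_congr rfl h, Finset.sum_add_distrib,
        Finset.sum_range_succ (f := fun k => ((n : ℝ) - k) * Real.cos (k * ξ))]
      simp
    have hd := omega_dirich ξ n
    push_cast at hd ih ⊢
    rw [hs]
    linear_combination ih + hd

lemma omega_intcos (k : ℕ) :
    (∫ ξ in (-π)..π, Real.cos ((k : ℝ) * ξ)) = if k = 0 then 2 * π else 0 := by
  rcases Nat.eq_zero_or_pos k with h | h
  · simp [h, two_mul]
  · have hk : (k : ℝ) ≠ 0 := Nat.cast_ne_zero.mpr h.ne'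
    rw [if_neg h.ne', intervalIntegral.integral_comp_mul_left (fun x => Real.cos x) hk]
    simp [Real.sin_nat_mul_pi]

lemma omega_intT (n : ℕ) :
    (∫ ξ in (-π)..π,
        ((∑ k ∈ Finset.range n, ((n : ℝ) - k) * Real.cos (k * ξ)) - n / 2)) = π * n := by
  have hint : ∀ k ∈ Finset.range n, IntervalIntegrable
      (fun ξ => ((n : ℝ) - k) * Real.cos (k * ξ)) volume (-π) π := by
    intro k _
    exact (Continuous.mul continuous_const (Real.continuous_cos.comp (by fun_prop))).intervalIntegrable _ _
  have hS : IntervalIntegrable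
      (fun ξ => ∑ k ∈ Finset.range n, ((n : ℝ) - k) * Real.cos (k * ξ)) volume (-π) π := by
    have := IntervalIntegrable.sum (μ := volume) (a := -π) (b := π) (Finset.range n)
      (f := fun k ξ => ((n : ℝ) - k) * Real.cos (k * ξ)) hint
    rw [show (fun ξ => ∑ k ∈ Finset.range n, ((n : ℝ) - k) * Real.cos (k * ξ))
        = ∑ k ∈ Finset.range n, fun ξ => ((n : ℝ) - k) * Real.cos (k * ξ) from by
      ext ξ; simp]
    exact this
  rw [intervalIntegral.integral_sub hS (intervalIntegrable_const),
    intervalIntegral.integral_finset_sum hint]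
  have : ∀ k ∈ Finset.range n,
      (∫ ξ in (-π)..π, ((n : ℝ) - k) * Real.cos (k * ξ))
        = ((n : ℝ) - k) * (if k = 0 then 2 * π else 0) := by
    intro k _
    rw [intervalIntegral.integral_const_mul, omega_intcos]
  rw [Finset.sum_congr rfl this, intervalIntegral.integral_const]
  have hsum : (∑ k ∈ Finset.range n, ((n : ℝ) - k) * (if k = 0 then 2 * π else 0))
      = 2 * π * n := by
    rcases Nat.eq_zero_or_pos n with h | h
    · simp [h]
    · rw [Finset.sum_eq_single_of_mem 0 (Finset.mem_range.mpr h)]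
      · simp; ring
      · intro k _ hk; simp [hk]
  rw [hsum]
  simp
  ring

noncomputable def omegaF : ℝ → ℝ :=
  fun ξ => 1 / ξ - Real.cos (ξ / 2) / (2 * Real.sin (ξ / 2))

noncomputable def omegaG : ℝ → ℝ :=
  fun ξ => 1 / (2 * (1 - Real.cos ξ)) - 1 / ξ ^ 2

lemma omega_sinsq (ξ : ℝ) : 2 * (1 - Real.cos ξ) = 4 * Real.sin (ξ / 2) ^ 2 := by
  have h : Real.cos ξ = 2 * Real.cos (ξ / 2) ^ 2 - 1 := by
    rw [← Real.cos_two_mul]; congr 1; ring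
  have h2 := Real.sin_sq_add_cos_sq (ξ / 2)
  nlinarith

lemma omega_hasDeriv {ξ : ℝ} (h1 : 0 < ξ) (h2 : ξ < π) :
    HasDerivAt omegaF (omegaG ξ) ξ := by
  have hs : 0 < Real.sin (ξ / 2) :=
    Real.sin_pos_of_pos_of_lt_pi (by linarith) (by linarith [Real.pi_pos])
  have hd1 : HasDerivAt (fun ξ : ℝ => 1 / ξ) (-(1 / ξ ^ 2)) ξ := by
    simpa [one_div] using hasDerivAt_inv h1.ne'
  have hid : HasDerivAt (fun ξ : ℝ => ξ / 2) (1 / 2) ξ := by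
    simpa using (hasDerivAt_id ξ).div_const 2
  have hc : HasDerivAt (fun ξ : ℝ => Real.cos (ξ / 2))
      (-Real.sin (ξ / 2) * (1 / 2)) ξ := hid.cos
  have hsn : HasDerivAt (fun ξ : ℝ => 2 * Real.sin (ξ / 2))
      (2 * (Real.cos (ξ / 2) * (1 / 2))) ξ :=
    hid.sin.const_mul 2
  have hq : HasDerivAt (fun ξ : ℝ => Real.cos (ξ / 2) / (2 * Real.sin (ξ / 2)))
      ((-Real.sin (ξ / 2) * (1 / 2) * (2 * Real.sin (ξ / 2))
          - Real.cos (ξ / 2) * (2 * (Real.cos (ξ / 2) * (1 / 2))))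
        / (2 * Real.sin (ξ / 2)) ^ 2) ξ :=
    hc.div hsn (by positivity)
  have := hd1.sub hq
  convert this using 1
  · rfl
  · rfl
  · rfl
  have hpyth := Real.sin_sq_add_cos_sq (ξ / 2)
  have h4 := omega_sinsq ξ
  have hξ2 : (ξ : ℝ) ^ 2 ≠ 0 := by positivity
  have hss : Real.sin (ξ / 2) ≠ 0 := hs.ne'
  unfold omegaG
  rw [omega_sinsq]
  field_simp
  linear_combination (-(4:ℝ) * ξ ^ 2) * hpyth

lemma omega_g_nonneg {ξ : ℝ} (h1 : 0 < ξ) (h2 : ξ ≤ π) : 0 ≤ omegaG ξ := by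
  have hs : 0 < Real.sin (ξ / 2) :=
    Real.sin_pos_of_pos_of_lt_pi (by linarith) (by linarith [Real.pi_pos])
  have hle : 2 * Real.sin (ξ / 2) ≤ ξ := by
    have := Real.sin_le (by linarith : (0:ℝ) ≤ ξ / 2)
    linarith
  have hsq : 4 * Real.sin (ξ / 2) ^ 2 ≤ ξ ^ 2 := by nlinarith
  have h4 : (0:ℝ) < 4 * Real.sin (ξ / 2) ^ 2 := by positivity
  unfold omegaG
  rw [omega_sinsq]
  have : 1 / ξ ^ 2 ≤ 1 / (4 * Real.sin (ξ / 2) ^ 2) :=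
    one_div_le_one_div_of_le h4 hsq
  linarith

lemma omega_F_bound {ξ : ℝ} (h1 : 0 < ξ) (h2 : ξ ≤ π) :
    0 ≤ omegaF ξ ∧ omegaF ξ ≤ π * ξ / 16 := by
  set t := ξ / 2 with ht
  have hpi := Real.pi_pos
  have ht1 : 0 < t := by positivity
  have ht2 : t ≤ π / 2 := by rw [ht]; linarith
  have hs : 0 < Real.sin t := Real.sin_pos_of_pos_of_lt_pi ht1 (by linarith)
  have hnum : 0 ≤ Real.sin t - t * Real.cos t := by
    rcases lt_or_eq_of_le ht2 with h | h
    · have hc : 0 < Real.cos t := Real.cos_pos_of_mem_Ioo ⟨by linarith, h⟩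
      have := Real.lt_tan ht1 h
      rw [Real.tan_eq_sin_div_cos] at this
      have := (lt_div_iff₀ hc).mp this
      linarith
    · rw [h]
      simp [Real.cos_pi_div_two]
  have hsinle : Real.sin t ≤ t := Real.sin_le ht1.le
  have hcosge : 1 - Real.cos t ≤ t ^ 2 / 2 := by
    have h4 := omega_sinsq t
    have : Real.sin (t / 2) ≤ t / 2 := Real.sin_le (by linarith)
    have hs2 : 0 ≤ Real.sin (t / 2) :=
      Real.sin_nonneg_of_nonneg_of_le_pi (by linarith) (by linarith)
    nlinarith
  have hnumle : Real.sin t - t * Real.cos t ≤ t ^ 3 / 2 := by nlinarith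
  have hsge : 2 / π * t ≤ Real.sin t := Real.mul_le_sin ht1.le ht2
  have hFval : omegaF ξ = (Real.sin t - t * Real.cos t) / (2 * t * Real.sin t) := by
    unfold omegaF
    rw [← ht]
    field_simp
    ring
  constructor
  · rw [hFval]; positivity
  · rw [hFval]
    have hden : 0 < 2 * t * Real.sin t := by positivity
    rw [div_le_iff₀ hden]
    have hd2 : 2 / π * t * (2 * t * 1) ≤ Real.sin t * (2 * t) := by nlinarith
    calc Real.sin t - t * Real.cos t ≤ t ^ 3 / 2 := hnumle
      _ ≤ π * ξ / 16 * (2 * t * (2 / π * t)) := by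
          have heq : π * ξ / 16 * (2 * t * (2 / π * t)) = t ^ 3 / 2 := by
            rw [ht]; field_simp; ring
          linarith
      _ ≤ π * ξ / 16 * (2 * t * Real.sin t) := by
          have : 0 ≤ π * ξ / 16 := by positivity
          nlinarith

lemma omega_F_zero : omegaF 0 = 0 := by
  unfold omegaF
  simp

lemma omega_F_cont : ContinuousOn omegaF (Icc 0 π) := by
  have hpi := Real.pi_pos
  intro x hx
  rcases eq_or_lt_of_le hx.1 with h0 | h0
  · -- continuity at 0 via squeeze
    rw [← h0]
    have hbound : ∀ y ∈ Icc (0:ℝ) π, 0 ≤ omegaF y ∧ omegaF y ≤ π * y / 16 := by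
      intro y hy
      rcases eq_or_lt_of_le hy.1 with h | h
      · rw [← h, omega_F_zero]; norm_num
      · exact omega_F_bound h hy.2
    have h1 : Tendsto (fun y : ℝ => π * y / 16) (nhdsWithin 0 (Icc 0 π)) (nhds 0) := by
      have : Tendsto (fun y : ℝ => π * y / 16) (nhds 0) (nhds (π * 0 / 16)) :=
        ((continuous_const.mul continuous_id).div_const 16).tendsto 0
      simpa using this.mono_left nhdsWithin_le_nhds
    have h0' : Tendsto (fun _ : ℝ => (0:ℝ)) (nhdsWithin 0 (Icc 0 π)) (nhds 0) :=
      tendsto_const_nhds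
    have : Tendsto omegaF (nhdsWithin 0 (Icc 0 π)) (nhds 0) := by
      apply tendsto_of_tendsto_of_tendsto_of_le_of_le' h0' h1
      · filter_upwards [self_mem_nhdsWithin] with y hy using (hbound y hy).1
      · filter_upwards [self_mem_nhdsWithin] with y hy using (hbound y hy).2
    unfold ContinuousWithinAt
    rwa [omega_F_zero]
  · -- continuity away from 0
    have hs : Real.sin (x / 2) ≠ 0 := by
      have : 0 < Real.sin (x / 2) :=
        Real.sin_pos_of_pos_of_lt_pi (by linarith) (by linarith [hx.2])
      exact this.ne'
    apply ContinuousAt.continuousWithinAt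
    unfold omegaF
    fun_prop (disch := intros; first | exact h0.ne' | positivity)

lemma omega_g_intble : IntervalIntegrable omegaG volume 0 π := by
  have hpi := Real.pi_pos
  apply intervalIntegral.intervalIntegrable_deriv_of_nonneg
    (g := omegaF)
  · rw [uIcc_of_le hpi.le]; exact omega_F_cont
  · intro x hx
    rw [min_eq_left hpi.le, max_eq_right hpi.le] at hx
    exact omega_hasDeriv hx.1 hx.2
  · intro x hx
    rw [min_eq_left hpi.le, max_eq_right hpi.le] at hx
    exact omega_g_nonneg hx.1 hx.2.le

lemma omega_g_int_right : (∫ ξ in (0:ℝ)..π, omegaG ξ) = 1 / π := by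
  have hpi := Real.pi_pos
  rw [intervalIntegral.integral_eq_sub_of_hasDerivAt_of_le hpi.le omega_F_cont
    (fun x hx => omega_hasDeriv hx.1 hx.2) omega_g_intble]
  rw [omega_F_zero]
  unfold omegaF
  rw [Real.cos_pi_div_two]
  simp

lemma omega_g_even (ξ : ℝ) : omegaG (-ξ) = omegaG ξ := by
  unfold omegaG
  rw [Real.cos_neg, neg_pow]
  simp

lemma omega_g_intble_left : IntervalIntegrable omegaG volume (-π) 0 := by
  have h := (IntervalIntegrable.iff_comp_neg (f := omegaG) (a := 0) (b := π)).mp omega_g_intble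
  simp only [omega_g_even, neg_zero] at h
  exact h.symm

lemma omega_g_int : (∫ ξ in (-π)..π, omegaG ξ) = 2 / π := by
  have hadd := intervalIntegral.integral_add_adjacent_intervals
    omega_g_intble_left omega_g_intble
  have hleft : (∫ ξ in (-π)..(0:ℝ), omegaG ξ) = ∫ ξ in (0:ℝ)..π, omegaG ξ := by
    have := intervalIntegral.integral_comp_neg (a := (0:ℝ)) (b := π) omegaG
    simp only [omega_g_even, neg_zero] at this
    exact this.symm
  rw [← hadd, hleft, omega_g_int_right]
  ring

theorem omega_eq_zero (x : ℤ) (hx : 0 ≤ x) :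
    (1 / (2 * π)) *
        ((∫ ξ in (-π)..π, (Real.cos (x * ξ) / (2 * (1 - Real.cos ξ)) - 1 / ξ ^ 2)) - 2 / π)
      + (x : ℝ) / 2 = 0 := by
  obtain ⟨n, rfl⟩ := Int.eq_ofNat_of_zero_le hx
  have hpi := Real.pi_pos
  have hTcont : Continuous
      (fun ξ : ℝ => (∑ k ∈ Finset.range n, ((n : ℝ) - k) * Real.cos (k * ξ)) - n / 2) := by
    fun_prop
  have hTint : IntervalIntegrable
      (fun ξ : ℝ => (∑ k ∈ Finset.range n, ((n : ℝ) - k) * Real.cos (k * ξ)) - n / 2)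
      volume (-π) π := hTcont.intervalIntegrable _ _
  have hGint : IntervalIntegrable omegaG volume (-π) π :=
    omega_g_intble_left.trans omega_g_intble
  have h0 : ∀ᵐ ξ : ℝ, ξ ≠ (0:ℝ) := by
    rw [MeasureTheory.ae_iff]
    have he : {a : ℝ | ¬a ≠ 0} = {0} := by ext y; simp
    rw [he]
    exact measure_singleton 0
  have hae : ∀ᵐ ξ : ℝ, ξ ∈ Set.uIoc (-π) π →
      (Real.cos (((n : ℤ) : ℝ) * ξ) / (2 * (1 - Real.cos ξ)) - 1 / ξ ^ 2)
        = omegaG ξ - ((∑ k ∈ Finset.range n, ((n : ℝ) - k) * Real.cos (k * ξ)) - n / 2) := by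
    filter_upwards [h0] with ξ hξ hmem
    have hmem' : ξ ∈ Set.Ioc (-π) π := by
      rwa [Set.uIoc_of_le (by linarith)] at hmem
    have hs2 : Real.sin (ξ / 2) ≠ 0 := by
      intro h
      have := (Real.sin_eq_zero_iff_of_lt_of_lt (by linarith [hmem'.1])
        (by linarith [hmem'.2, hpi])).mp h
      exact hξ (by linarith)
    have hc2 : 2 * (1 - Real.cos ξ) ≠ 0 := by
      rw [omega_sinsq]; positivity
    have hk := omega_key n ξ
    have hdiv : Real.cos ((n : ℝ) * ξ) / (2 * (1 - Real.cos ξ))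
        = 1 / (2 * (1 - Real.cos ξ))
          - ((∑ k ∈ Finset.range n, ((n : ℝ) - k) * Real.cos (k * ξ)) - n / 2) := by
      rw [div_eq_iff hc2, sub_mul, one_div_mul_cancel hc2]
      linear_combination -hk
    push_cast
    rw [hdiv]
    unfold omegaG
    ring
  rw [intervalIntegral.integral_congr_ae hae,
    intervalIntegral.integral_sub hGint hTint, omega_g_int, omega_intT n]
  push_cast
  field_simp
  ring
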